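/- Fix a ∈ (0,∞) and consider, for each ℓ and q, the Markov chain (Y_n)_{n≥0} on {0,…,ℓ} with transition matrix M_H, and let τ_0 = inf{n ≥ 0 : Y_n = 0}. Then limsup (1/ℓ)·ln E(τ_0 | Y_0 = ℓ) ≤ ln κ in the regime ℓ → ∞, q → 0 with ℓq → a. -/

import Mathlib

open Filter Finset

noncomputable section

/-- The lumped mutation matrix `M_H`. -/
def MH (ℓ κ : ℕ) (p : ℝ) (b c : ℕ) : ℝ :=
  ∑ k ∈ Finset.range (ℓ - b + 1), ∑ h ∈ Finset.range (b + 1),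
    if (k : ℤ) - (h : ℤ) = (c : ℤ) - (b : ℤ) then
      (Nat.choose (ℓ - b) k : ℝ) * (Nat.choose b h : ℝ)
        * (p * (1 - 1 / (κ : ℝ))) ^ k
        * (1 - p * (1 - 1 / (κ : ℝ))) ^ (ℓ - b - k)
        * (p / (κ : ℝ)) ^ h * (1 - p / (κ : ℝ)) ^ (b - h)
    else 0

lemma MH_nonneg (L K : ℕ) (p : ℝ) (h1 : 0 ≤ p * (1 - 1 / (K : ℝ)))
    (h2 : p * (1 - 1 / (K : ℝ)) ≤ 1) (h3 : 0 ≤ p / (K : ℝ)) (h4 : p / (K : ℝ) ≤ 1)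
    (b c : ℕ) : 0 ≤ MH L K p b c := by
  unfold MH
  refine Finset.sum_nonneg fun k _ => Finset.sum_nonneg fun h _ => ?_
  split
  · have h2' : (0:ℝ) ≤ 1 - p * (1 - 1 / (K : ℝ)) := by linarith
    have h4' : (0:ℝ) ≤ 1 - p / (K : ℝ) := by linarith
    positivity
  · exact le_refl 0

lemma sumMH (L K : ℕ) (p u v : ℝ) (b : ℕ) (hb : b ≤ L) :
    ∑ c ∈ Finset.range (L + 1), MH L K p b c * (u ^ c * v ^ (L - c))
      = ((p / (K : ℝ)) * v + (1 - p / (K : ℝ)) * u) ^ b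
        * ((p * (1 - 1 / (K : ℝ))) * u + (1 - p * (1 - 1 / (K : ℝ))) * v) ^ (L - b) := by
  set w := p * (1 - 1 / (K : ℝ)) with hw
  set r := p / (K : ℝ) with hr
  have step1 : ∑ c ∈ Finset.range (L + 1), MH L K p b c * (u ^ c * v ^ (L - c))
      = ∑ k ∈ Finset.range (L - b + 1), ∑ h ∈ Finset.range (b + 1),
          ((Nat.choose (L - b) k : ℝ) * (Nat.choose b h : ℝ) * w ^ k * (1 - w) ^ (L - b - k)
            * r ^ h * (1 - r) ^ (b - h)) * (u ^ ((b - h) + k) * v ^ ((L - b - k) + h)) := by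
    simp only [MH, Finset.sum_mul, ite_mul, zero_mul]
    rw [Finset.sum_comm]
    refine Finset.sum_congr rfl fun k hk => ?_
    rw [Finset.sum_comm]
    refine Finset.sum_congr rfl fun h hh => ?_
    simp only [Finset.mem_range] at hk hh
    have hk' : k ≤ L - b := by omega
    have hh' : h ≤ b := by omega
    rw [Finset.sum_eq_single (b + k - h)]
    · rw [if_pos (by omega), show (b - h) + k = b + k - h by omega,
        show (L - b - k) + h = L - (b + k - h) by omega]
    · intro c hc hne
      simp only [Finset.mem_range] at hc
      rw [if_neg (by omega)]
    · intro hmem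
      exact absurd (Finset.mem_range.mpr (by omega)) hmem
  rw [step1, add_pow, add_pow]
  rw [Finset.sum_mul_sum]
  conv_rhs => rw [Finset.sum_comm]
  refine Finset.sum_congr rfl fun k hk => Finset.sum_congr rfl fun h hh => ?_
  simp only [mul_pow, pow_add]
  ring

def Uf (K : ℕ) (lam : ℝ) (s : ℕ) : ℝ := (1 - lam ^ s) / (K : ℝ)
def Vf (K : ℕ) (lam : ℝ) (s : ℕ) : ℝ := (1 + ((K : ℝ) - 1) * lam ^ s) / (K : ℝ)

lemma key (K : ℕ) (hK : 2 ≤ K) (L : ℕ) (hL : 1 ≤ L) (q : ℝ)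
    (hq0 : 0 < q) (hq1 : q < 1 - 1 / (K : ℝ))
    (T : ℕ → ℝ) (hT0 : T 0 = 0)
    (hTeq : ∀ b, 1 ≤ b → b ≤ L →
      T b = 1 + ∑ c ∈ Finset.range (L + 1),
        MH L K ((K : ℝ) * q / ((K : ℝ) - 1)) b c * T c)
    (hTpos : ∀ b, b ≤ L → 0 ≤ T b)
    (t : ℕ) (ht : 1 ≤ t) :
    T L ≤ t * ((K : ℝ) ^ L) / (1 - (1 - (K : ℝ) * q / ((K : ℝ) - 1)) ^ t) ^ L := by
  have hK1 : (1 : ℝ) < (K : ℝ) := by exact_mod_cast hK.trans_lt' one_lt_two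
  have hKpos : (0 : ℝ) < (K : ℝ) := by linarith
  have hKne : (K : ℝ) ≠ 0 := ne_of_gt hKpos
  have hK1pos : (0 : ℝ) < (K : ℝ) - 1 := by linarith
  set p : ℝ := (K : ℝ) * q / ((K : ℝ) - 1) with hp
  have hp0 : 0 < p := div_pos (mul_pos hKpos hq0) hK1pos
  have hp1 : p < 1 := by
    rw [hp, div_lt_one hK1pos]
    have h2 : (K : ℝ) * q < (K : ℝ) * (1 - 1 / (K : ℝ)) :=
      (mul_lt_mul_iff_right₀ hKpos).mpr hq1
    have h3 : (K : ℝ) * (1 - 1 / (K : ℝ)) = (K : ℝ) - 1 := by field_simp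
    linarith
  have hpw : p * (1 - 1 / (K : ℝ)) = q := by rw [hp]; field_simp
  have hw0 : 0 ≤ p * (1 - 1 / (K : ℝ)) := by rw [hpw]; exact hq0.le
  have hw1 : p * (1 - 1 / (K : ℝ)) ≤ 1 := by
    rw [hpw]
    have h4 : (0:ℝ) < 1 / (K : ℝ) := by positivity
    linarith
  have hr0 : 0 ≤ p / (K : ℝ) := by positivity
  have hr1 : p / (K : ℝ) ≤ 1 := by rw [div_le_one hKpos]; linarith
  have hMH : ∀ b c, 0 ≤ MH L K p b c := MH_nonneg L K p hw0 hw1 hr0 hr1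
  set lam : ℝ := 1 - p with hlam
  have hlam0 : 0 ≤ lam := by rw [hlam]; linarith
  have hlam1 : lam < 1 := by rw [hlam]; linarith
  have hpow0 : ∀ s : ℕ, 0 ≤ lam ^ s := fun s => pow_nonneg hlam0 s
  have hpow1 : ∀ s : ℕ, lam ^ s ≤ 1 := fun s => pow_le_one₀ hlam0 hlam1.le
  have hU0 : ∀ s, 0 ≤ Uf K lam s := fun s =>
    div_nonneg (by have := hpow1 s; linarith) hKpos.le
  have hUV : ∀ s, Uf K lam s ≤ Vf K lam s := by
    intro s
    unfold Uf Vf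
    have hnum : 1 - lam ^ s ≤ 1 + ((K : ℝ) - 1) * lam ^ s := by nlinarith [hpow0 s]
    exact div_le_div_of_nonneg_right hnum hKpos.le
  have hV1 : ∀ s, Vf K lam s ≤ 1 := by
    intro s
    unfold Vf
    rw [div_le_one hKpos]
    nlinarith [hpow1 s]
  have hUrec : ∀ s, (p / (K : ℝ)) * Vf K lam s + (1 - p / (K : ℝ)) * Uf K lam s
      = Uf K lam (s + 1) := by
    intro s
    unfold Uf Vf
    rw [pow_succ, hlam]
    field_simp
    ring
  have hVrec : ∀ s, (p * (1 - 1 / (K : ℝ))) * Uf K lam s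
      + (1 - p * (1 - 1 / (K : ℝ))) * Vf K lam s = Vf K lam (s + 1) := by
    intro s
    unfold Uf Vf
    rw [pow_succ, hlam]
    field_simp
    ring
  set S : ℝ := (Finset.range (L + 1)).sup' Finset.nonempty_range_add_one T with hSdef
  have hS : ∀ c, c ≤ L → T c ≤ S := fun c hc =>
    Finset.le_sup' T (Finset.mem_range.mpr (by omega))
  have hS0 : 0 ≤ S := hT0 ▸ hS 0 (by omega)
  have main : ∀ s : ℕ, ∀ b, b ≤ L →
      T b ≤ s + (1 - Uf K lam s ^ b * Vf K lam s ^ (L - b)) * S := by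
    intro s
    induction s with
    | zero =>
      intro b hb
      have hu : Uf K lam 0 = 0 := by unfold Uf; simp
      have hv : Vf K lam 0 = 1 := by unfold Vf; field_simp; ring
      rw [hu, hv]
      rcases Nat.eq_zero_or_pos b with hb0 | hb1
      · subst hb0
        simp [hT0]
      · rw [zero_pow (by omega : b ≠ 0), one_pow]
        simpa using hS b hb
    | succ s ih =>
      intro b hb
      have hf1 : Uf K lam (s+1) ^ b * Vf K lam (s+1) ^ (L - b) ≤ 1 := by
        have h1 : Uf K lam (s+1) ^ b ≤ 1 := pow_le_one₀ (hU0 _) ((hUV _).trans (hV1 _))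
        have h2 : Vf K lam (s+1) ^ (L - b) ≤ 1 :=
          pow_le_one₀ ((hU0 _).trans (hUV _)) (hV1 _)
        have h3 : 0 ≤ Uf K lam (s+1) ^ b := pow_nonneg (hU0 _) _
        have h4 : 0 ≤ Vf K lam (s+1) ^ (L - b) := pow_nonneg ((hU0 _).trans (hUV _)) _
        nlinarith
      rcases Nat.eq_zero_or_pos b with hb0 | hb1
      · subst hb0
        rw [hT0]
        have : 0 ≤ (1 - Uf K lam (s+1) ^ 0 * Vf K lam (s+1) ^ (L - 0)) * S :=
          mul_nonneg (by linarith [hf1]) hS0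
        push_cast
        linarith
      · have rows : ∑ c ∈ Finset.range (L + 1), MH L K p b c = 1 := by
          have h := sumMH L K p 1 1 b hb
          simpa using h
        have hfs : ∑ c ∈ Finset.range (L + 1),
            MH L K p b c * (Uf K lam s ^ c * Vf K lam s ^ (L - c))
            = Uf K lam (s+1) ^ b * Vf K lam (s+1) ^ (L - b) := by
          rw [sumMH L K p (Uf K lam s) (Vf K lam s) b hb, hUrec s, hVrec s]
        calc T b = 1 + ∑ c ∈ Finset.range (L + 1), MH L K p b c * T c := hTeq b hb1 hb
          _ ≤ 1 + ∑ c ∈ Finset.range (L + 1),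
                MH L K p b c * (s + (1 - Uf K lam s ^ c * Vf K lam s ^ (L - c)) * S) := by
              apply add_le_add le_rfl
              apply Finset.sum_le_sum
              intro c hc
              exact mul_le_mul_of_nonneg_left
                (ih c (by simpa [Nat.lt_succ_iff] using hc)) (hMH b c)
          _ = 1 + ((s + S) * ∑ c ∈ Finset.range (L + 1), MH L K p b c
                - S * ∑ c ∈ Finset.range (L + 1),
                    MH L K p b c * (Uf K lam s ^ c * Vf K lam s ^ (L - c))) := by
              rw [Finset.mul_sum, Finset.mul_sum, ← Finset.sum_sub_distrib]
              congr 1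
              apply Finset.sum_congr rfl
              intro c _
              ring
          _ = 1 + ((s + S) * 1 - S * (Uf K lam (s+1) ^ b * Vf K lam (s+1) ^ (L - b))) := by
              rw [rows, hfs]
          _ = (s+1 : ℕ) + (1 - Uf K lam (s+1) ^ b * Vf K lam (s+1) ^ (L - b)) * S := by
              push_cast
              ring
  obtain ⟨b0, hb0mem, hb0⟩ :=
    Finset.exists_mem_eq_sup' (s := Finset.range (L + 1)) Finset.nonempty_range_add_one T
  have hb0L : b0 ≤ L := by
    have := Finset.mem_range.mp hb0mem
    omega
  have hmax := main t b0 hb0L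
  have hSb0 : S = T b0 := hb0
  have hfSt : Uf K lam t ^ b0 * Vf K lam t ^ (L - b0) * S ≤ t := by nlinarith [hmax, hSb0]
  have hlamt : lam ^ t < 1 := by
    calc lam ^ t ≤ lam := pow_le_of_le_one hlam0 hlam1.le (by omega)
      _ < 1 := hlam1
  have hUt : 0 < Uf K lam t := by
    unfold Uf
    apply div_pos (by linarith) hKpos
  have hUL : (0:ℝ) < Uf K lam t ^ L := pow_pos hUt L
  have hUVle : Uf K lam t ^ L ≤ Uf K lam t ^ b0 * Vf K lam t ^ (L - b0) := by
    calc Uf K lam t ^ L = Uf K lam t ^ b0 * Uf K lam t ^ (L - b0) := by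
          rw [← pow_add]
          congr 1
          omega
      _ ≤ Uf K lam t ^ b0 * Vf K lam t ^ (L - b0) := by
          apply mul_le_mul_of_nonneg_left _ (pow_nonneg (hU0 t) b0)
          exact pow_le_pow_left₀ (hU0 t) (hUV t) _
  have hSle : S ≤ t / Uf K lam t ^ L := by
    rw [le_div_iff₀ hUL]
    calc S * Uf K lam t ^ L = Uf K lam t ^ L * S := by ring
      _ ≤ Uf K lam t ^ b0 * Vf K lam t ^ (L - b0) * S :=
          mul_le_mul_of_nonneg_right hUVle hS0
      _ ≤ t := hfSt
  have hfin : T L ≤ t / Uf K lam t ^ L := le_trans (hS L le_rfl) hSle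
  have hU : Uf K lam t ^ L = (1 - lam ^ t) ^ L / (K : ℝ) ^ L := by
    unfold Uf
    rw [div_pow]
  rw [hU, div_div_eq_mul_div] at hfin
  exact hfin

set_option maxHeartbeats 800000 in
lemma perN (K L t : ℕ) (hK1 : (1:ℝ) < (K : ℝ)) (hL2 : 2 ≤ L) (p : ℝ)
    (hp0 : 0 < p) (hp1 : p < 1)
    (A : ℝ) (hA : 0 < A) (hpL : A / 2 ≤ p * (L : ℝ)) (hbig : 4 / A + 4 ≤ (L : ℝ))
    (ht_lb : Real.log L / p ≤ (t : ℝ)) (ht_ub : (t : ℝ) ≤ Real.log L / p + 2)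
    (ht1 : 1 ≤ t) (T : ℝ) (hT1 : 1 ≤ T)
    (hbound : T ≤ (t : ℝ) * ((K : ℝ) ^ L) / (1 - (1 - p) ^ t) ^ L) :
    (1 / (L : ℝ)) * Real.log T
      ≤ 3 * (Real.log L / (L : ℝ)) - Real.log (1 - 1 / (L : ℝ)) + Real.log (K : ℝ) := by
  have hLr2 : (2 : ℝ) ≤ (L : ℝ) := by exact_mod_cast hL2
  have hLrpos : (0 : ℝ) < (L : ℝ) := by linarith
  have hLrne : (L : ℝ) ≠ 0 := ne_of_gt hLrpos
  have hlogL0 : 0 ≤ Real.log L := Real.log_nonneg (by linarith)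
  have htpos : (0:ℝ) < (t : ℝ) := by exact_mod_cast Nat.lt_of_lt_of_le Nat.zero_lt_one ht1
  -- (1 - p) ^ t ≤ 1 / L
  have hptl : Real.log L ≤ (t : ℝ) * p := by
    rw [div_le_iff₀ hp0] at ht_lb
    linarith
  have hstep1 : (1 - p) ^ t ≤ Real.exp (-p) ^ t := by
    apply pow_le_pow_left₀ (by linarith)
    linarith [Real.add_one_le_exp (-p)]
  have hstep2 : Real.exp (-p) ^ t = Real.exp (-((t : ℝ) * p)) := by
    rw [← Real.exp_nat_mul]
    congr 1
    ring
  have hstep3 : Real.exp (-((t : ℝ) * p)) ≤ 1 / (L : ℝ) := by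
    have h1 : Real.exp (-((t : ℝ) * p)) ≤ Real.exp (-(Real.log L)) :=
      Real.exp_le_exp.mpr (by linarith)
    have h2 : Real.exp (-(Real.log L)) = 1 / (L : ℝ) := by
      rw [Real.exp_neg, Real.exp_log hLrpos, one_div]
    linarith
  have hlamt : (1 - p) ^ t ≤ 1 / (L : ℝ) := by
    calc (1 - p) ^ t ≤ Real.exp (-p) ^ t := hstep1
      _ = Real.exp (-((t : ℝ) * p)) := hstep2
      _ ≤ 1 / (L : ℝ) := hstep3
  have hd1 : (0:ℝ) < 1 - 1 / (L : ℝ) := by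
    have h12 : 1 / (L : ℝ) ≤ 1 / 2 := one_div_le_one_div_of_le two_pos hLr2
    linarith
  have hdenge : 1 - 1 / (L : ℝ) ≤ 1 - (1 - p) ^ t := by linarith
  have hden2pos : (0:ℝ) < (1 - 1 / (L : ℝ)) ^ L := pow_pos hd1 L
  have hKpos : (0:ℝ) < (K : ℝ) := by linarith
  have hXle : (t : ℝ) * ((K : ℝ) ^ L) / (1 - (1 - p) ^ t) ^ L
      ≤ (t : ℝ) * ((K : ℝ) ^ L) / (1 - 1 / (L : ℝ)) ^ L := by
    apply div_le_div_of_nonneg_left (by positivity) hden2pos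
    exact pow_le_pow_left₀ hd1.le hdenge L
  have hTle : T ≤ (t : ℝ) * ((K : ℝ) ^ L) / (1 - 1 / (L : ℝ)) ^ L :=
    le_trans hbound hXle
  have hTpos' : (0:ℝ) < T := by linarith
  have hlogX : Real.log ((t : ℝ) * ((K : ℝ) ^ L) / (1 - 1 / (L : ℝ)) ^ L)
      = Real.log t + (L : ℝ) * Real.log (K : ℝ)
        - (L : ℝ) * Real.log (1 - 1 / (L : ℝ)) := by
    rw [Real.log_div (by positivity) (by positivity),
      Real.log_mul (by positivity) (by positivity), Real.log_pow, Real.log_pow]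
  have hlogT : Real.log T ≤ Real.log t + (L : ℝ) * Real.log (K : ℝ)
      - (L : ℝ) * Real.log (1 - 1 / (L : ℝ)) := by
    rw [← hlogX]
    exact Real.log_le_log hTpos' hTle
  -- t ≤ L ^ 3
  have hinvp : 1 / p ≤ 2 * (L : ℝ) / A := by
    rw [div_le_div_iff₀ hp0 hA]
    linarith [hpL]
  have hlogLle : Real.log L ≤ (L : ℝ) := by
    linarith [Real.log_le_sub_one_of_pos hLrpos]
  have ht3 : (t : ℝ) ≤ (L : ℝ) ^ (3:ℕ) := by
    have e1 : Real.log L / p = Real.log L * (1 / p) := by ring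
    have e2 : Real.log L * (1 / p) ≤ (L : ℝ) * (2 * (L : ℝ) / A) :=
      mul_le_mul hlogLle hinvp (by positivity) hLrpos.le
    have hc : 2 * (2 / A) + 4 ≤ (L : ℝ) := by
      have h4A : (4:ℝ) / A = 2 * (2 / A) := by ring
      linarith
    have key3 : (L : ℝ) ^ 2 * (2 * (2 / A) + 4) ≤ (L : ℝ) ^ 2 * (L : ℝ) :=
      mul_le_mul_of_nonneg_left hc (sq_nonneg _)
    have e3 : (L : ℝ) * (2 * (L : ℝ) / A) = (2 / A) * (L : ℝ) ^ 2 := by ring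
    have e6 : (t : ℝ) ≤ (2 / A) * (L : ℝ) ^ 2 + 2 := by
      rw [e1] at ht_ub
      linarith [e2, e3.le]
    have hsq : (0:ℝ) ≤ (2 / A) * (L : ℝ) ^ 2 := by positivity
    have hL2' : (4:ℝ) ≤ (L : ℝ) ^ 2 := by nlinarith [sq_nonneg ((L : ℝ) - 2)]
    have ecube : (L : ℝ) ^ 2 * (L : ℝ) = (L : ℝ) ^ (3:ℕ) := by ring
    linarith [key3, hsq, hL2']
  have hlogt : Real.log t ≤ 3 * Real.log L := by
    calc Real.log t ≤ Real.log ((L : ℝ) ^ (3:ℕ)) := Real.log_le_log htpos ht3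
      _ = 3 * Real.log L := by rw [Real.log_pow]; push_cast; ring
  -- assemble
  have hgle : (1 / (L : ℝ)) * Real.log T
      ≤ (1 / (L : ℝ)) * (Real.log t + (L : ℝ) * Real.log (K : ℝ)
        - (L : ℝ) * Real.log (1 - 1 / (L : ℝ))) :=
    mul_le_mul_of_nonneg_left hlogT (by positivity)
  have e4 : (1 / (L : ℝ)) * (Real.log t + (L : ℝ) * Real.log (K : ℝ)
      - (L : ℝ) * Real.log (1 - 1 / (L : ℝ)))
      = Real.log t / (L : ℝ) + Real.log (K : ℝ) - Real.log (1 - 1 / (L : ℝ)) := by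
    rw [mul_sub, mul_add, one_div, inv_mul_cancel_left₀ hLrne, inv_mul_cancel_left₀ hLrne]
    ring
  have e5 : Real.log t / (L : ℝ) ≤ 3 * (Real.log L / (L : ℝ)) := by
    have h1 : Real.log t / (L : ℝ) ≤ (3 * Real.log L) / (L : ℝ) :=
      div_le_div_of_nonneg_right hlogt hLrpos.le
    have h2 : (3 * Real.log L) / (L : ℝ) = 3 * (Real.log L / (L : ℝ)) := by ring
    linarith
  rw [e4] at hgle
  linarith

/-- `Texp n b` is the expected hitting time of `0` for the Markov chain on
`{0,…,ℓ n}` with transition matrix `M_H`, started at `b`; for a finite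
irreducible chain it is the unique nonnegative solution of the system of
equations below. -/
theorem hitting_time_upper_bound
    (κ : ℕ) (hκ : 2 ≤ κ)
    (ℓ : ℕ → ℕ) (q : ℕ → ℝ)
    (hℓ1 : ∀ n, 1 ≤ ℓ n)
    (hq : ∀ n, 0 < q n ∧ q n < 1 - 1 / (κ : ℝ))
    (hℓ : Tendsto ℓ atTop atTop) (hq0 : Tendsto q atTop (nhds 0))
    (a : ℝ) (ha : 0 < a)
    (hla : Tendsto (fun n => (ℓ n : ℝ) * q n) atTop (nhds a))
    (Texp : ℕ → ℕ → ℝ)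
    (hT0 : ∀ n, Texp n 0 = 0)
    (hTeq : ∀ n b, 1 ≤ b → b ≤ ℓ n →
      Texp n b = 1 + ∑ c ∈ Finset.range (ℓ n + 1),
        MH (ℓ n) κ ((κ : ℝ) * q n / ((κ : ℝ) - 1)) b c * Texp n c)
    (hTpos : ∀ n b, b ≤ ℓ n → 0 ≤ Texp n b) :
    Filter.limsup (fun n => (1 / (ℓ n : ℝ)) * Real.log (Texp n (ℓ n))) atTop
      ≤ Real.log (κ : ℝ) := by
  have hK1 : (1 : ℝ) < (κ : ℝ) := by exact_mod_cast hκ.trans_lt' one_lt_two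
  have hKpos : (0 : ℝ) < (κ : ℝ) := by linarith
  have hKne : (κ : ℝ) ≠ 0 := ne_of_gt hKpos
  have hK1pos : (0 : ℝ) < (κ : ℝ) - 1 := by linarith
  set pn : ℕ → ℝ := fun n => (κ : ℝ) * q n / ((κ : ℝ) - 1) with hpn
  have hp0 : ∀ n, 0 < pn n := fun n => div_pos (mul_pos hKpos (hq n).1) hK1pos
  have hp1 : ∀ n, pn n < 1 := by
    intro n
    rw [hpn]
    simp only
    rw [div_lt_one hK1pos]
    have h2 : (κ : ℝ) * q n < (κ : ℝ) * (1 - 1 / (κ : ℝ)) :=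
      (mul_lt_mul_iff_right₀ hKpos).mpr (hq n).2
    have h3 : (κ : ℝ) * (1 - 1 / (κ : ℝ)) = (κ : ℝ) - 1 := by field_simp
    linarith
  -- choice of times
  set t : ℕ → ℕ := fun n => ⌈Real.log (ℓ n) / pn n⌉₊ + 1 with htdef
  have ht1 : ∀ n, 1 ≤ t n := fun n => Nat.le_add_left 1 _
  -- the bound from `key`
  have hbound : ∀ n, Texp n (ℓ n) ≤
      (t n) * ((κ : ℝ) ^ (ℓ n)) / (1 - (1 - pn n) ^ (t n)) ^ (ℓ n) := by
    intro n
    exact key κ hκ (ℓ n) (hℓ1 n) (q n) (hq n).1 (hq n).2 (Texp n) (hT0 n)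
      (fun b h1 h2 => hTeq n b h1 h2) (fun b hb => hTpos n b hb) (t n) (ht1 n)
  -- Texp n (ℓ n) ≥ 1
  have hMHnn : ∀ n b c, 0 ≤ MH (ℓ n) κ (pn n) b c := by
    intro n
    have hpw : pn n * (1 - 1 / (κ : ℝ)) = q n := by
      rw [hpn]; simp only; field_simp
    apply MH_nonneg
    · rw [hpw]; exact (hq n).1.le
    · rw [hpw]
      have h4 : (0:ℝ) < 1 / (κ : ℝ) := by positivity
      linarith [(hq n).2]
    · exact div_nonneg (hp0 n).le hKpos.le
    · rw [div_le_one hKpos]; linarith [hp1 n]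
  have hT1 : ∀ n, 1 ≤ Texp n (ℓ n) := by
    intro n
    rw [hTeq n (ℓ n) (hℓ1 n) le_rfl]
    have : 0 ≤ ∑ c ∈ Finset.range (ℓ n + 1),
        MH (ℓ n) κ ((κ : ℝ) * q n / ((κ : ℝ) - 1)) (ℓ n) c * Texp n c := by
      apply Finset.sum_nonneg
      intro c hc
      exact mul_nonneg (hMHnn n (ℓ n) c)
        (hTpos n c (by simpa [Nat.lt_succ_iff] using hc))
    linarith
  set g : ℕ → ℝ := fun n => (1 / (ℓ n : ℝ)) * Real.log (Texp n (ℓ n)) with hgdef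
  set h : ℕ → ℝ := fun n =>
    3 * (Real.log (ℓ n) / (ℓ n)) - Real.log (1 - 1 / (ℓ n)) + Real.log (κ : ℝ) with hhdef
  have hg0 : ∀ n, 0 ≤ g n := by
    intro n
    apply mul_nonneg (by positivity)
    exact Real.log_nonneg (hT1 n)
  -- limit of h
  have hLtop : Tendsto (fun n => (ℓ n : ℝ)) atTop atTop :=
    tendsto_natCast_atTop_atTop.comp hℓ
  have hlim1 : Tendsto (fun n => Real.log (ℓ n) / (ℓ n)) atTop (nhds 0) :=
    (Real.isLittleO_log_id_atTop.tendsto_div_nhds_zero).comp hLtop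
  have hinv0 : Tendsto (fun n => 1 / (ℓ n : ℝ)) atTop (nhds 0) := by
    exact hLtop.inv_tendsto_atTop.congr (fun n => by simp)
  have hlim2 : Tendsto (fun n => Real.log (1 - 1 / (ℓ n : ℝ))) atTop (nhds 0) := by
    have h1 : Tendsto (fun n => 1 - 1 / (ℓ n : ℝ)) atTop (nhds 1) := by
      simpa using (tendsto_const_nhds (x := (1:ℝ))).sub hinv0
    have h2 : ContinuousAt Real.log 1 := Real.continuousAt_log one_ne_zero
    have := h2.tendsto.comp h1
    simpa [Function.comp_def] using this
  have hhlim : Tendsto h atTop (nhds (Real.log (κ : ℝ))) := by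
    rw [hhdef]
    have : Tendsto (fun n => 3 * (Real.log (ℓ n) / (ℓ n))
        - Real.log (1 - 1 / (ℓ n)) + Real.log (κ : ℝ)) atTop
        (nhds (3 * 0 - 0 + Real.log (κ : ℝ))) :=
      (((hlim1.const_mul 3).sub hlim2).add tendsto_const_nhds)
    simpa using this
  -- eventual inequality g ≤ h
  set A : ℝ := (κ : ℝ) * a / ((κ : ℝ) - 1) with hAdef
  have hA : 0 < A := div_pos (mul_pos hKpos ha) hK1pos
  have hpl : Tendsto (fun n => pn n * (ℓ n : ℝ)) atTop (nhds A) := by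
    have h1 : Tendsto (fun n => ((κ : ℝ) / ((κ : ℝ) - 1)) * ((ℓ n : ℝ) * q n)) atTop
        (nhds (((κ : ℝ) / ((κ : ℝ) - 1)) * a)) := hla.const_mul _
    have h2 : ((κ : ℝ) / ((κ : ℝ) - 1)) * a = A := by rw [hAdef]; ring
    rw [h2] at h1
    apply h1.congr
    intro n
    rw [hpn]
    simp only
    ring
  have hpl2 : ∀ᶠ n in atTop, A / 2 ≤ pn n * (ℓ n : ℝ) :=
    hpl.eventually (eventually_ge_nhds (by linarith))
  have hE2 : ∀ᶠ n in atTop, 2 ≤ ℓ n := hℓ.eventually_ge_atTop 2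
  have hLbig : ∀ᶠ n in atTop, (4 / A + 4 : ℝ) ≤ (ℓ n : ℝ) :=
    hLtop.eventually_ge_atTop _
  have hgh : ∀ᶠ n in atTop, g n ≤ h n := by
    filter_upwards [hpl2, hE2, hLbig] with n hpL h2 hbig
    have hpn0 := hp0 n
    have hlogpos : (0:ℝ) ≤ Real.log (ℓ n) / pn n := by
      have : (1:ℝ) ≤ (ℓ n : ℝ) := by exact_mod_cast hℓ1 n
      have hl0 : 0 ≤ Real.log (ℓ n) := Real.log_nonneg this
      positivity
    have ht_lb : Real.log (ℓ n) / pn n ≤ (t n : ℝ) := by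
      rw [htdef]
      push_cast
      linarith [Nat.le_ceil (Real.log (ℓ n) / pn n)]
    have ht_ub : (t n : ℝ) ≤ Real.log (ℓ n) / pn n + 2 := by
      rw [htdef]
      push_cast
      linarith [Nat.ceil_lt_add_one hlogpos]
    exact perN κ (ℓ n) (t n) hK1 h2 (pn n) (hp0 n) (hp1 n) A hA hpL hbig
      ht_lb ht_ub (ht1 n) (Texp n (ℓ n)) (hT1 n) (hbound n)
  -- conclude via limsup comparison
  have hgbdd : IsBoundedUnder (· ≥ ·) atTop g := isBoundedUnder_of ⟨0, hg0⟩
  have hco : IsCoboundedUnder (· ≤ ·) atTop g := hgbdd.isCoboundedUnder_le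
  have hhbdd : IsBoundedUnder (· ≤ ·) atTop h := hhlim.isBoundedUnder_le
  calc Filter.limsup g atTop ≤ Filter.limsup h atTop := limsup_le_limsup hgh hco hhbdd
    _ = Real.log (κ : ℝ) := hhlim.limsup_eq

end
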